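/- Let τ ∈ S_d be a d-cycle and let (σ_1, ..., σ_{r-1}) be a factorization of τ of type (e_1, ..., e_{r-1}). Then ∑_{i=1}^{r-1} (e_i − 1) = d − 1 + 2g for some integer g ≥ 0; that is, ∑_{i=1}^{r-1} (e_i − 1) ≥ d − 1 and ∑_{i=1}^{r-1} (e_i − 1) − (d − 1) is even. -/

import Mathlib

open Equiv Equiv.Perm

variable {α : Type*} [Fintype α] [DecidableEq α]

/-- ℤ-valued minimal transposition count. -/
private def gZ (π : Perm α) : ℤ :=
  (π.cycleType.sum : ℤ) - (Multiset.card π.cycleType : ℤ)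

private lemma gZ_one : gZ (1 : Perm α) = 0 := by
  simp [gZ]

private lemma gZ_mul_disjoint {f g : Perm α} (h : Perm.Disjoint f g) :
    gZ (f * g) = gZ f + gZ g := by
  simp only [gZ, h.cycleType_mul, Multiset.sum_add, Multiset.card_add]
  push_cast
  ring

private lemma gZ_cycle {c : Perm α} (h : c.IsCycle) :
    gZ c = (c.support.card : ℤ) - 1 := by
  simp [gZ, h.cycleType]

private lemma gZ_le {π : Perm α} (h : π ≠ 1) :
    gZ π ≤ (π.support.card : ℤ) - 1 := by
  have h1 : π.cycleType.sum = π.support.card := sum_cycleType π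
  have h2 : 0 < Multiset.card π.cycleType := card_cycleType_pos.mpr h
  simp only [gZ, h1]
  have : (1 : ℤ) ≤ (Multiset.card π.cycleType : ℤ) := by exact_mod_cast h2
  linarith

/-- Case B: `a` moved, `b` fixed. -/
private lemma gZ_swap_mul_aux {a b : α} (π : Perm α) (hab : a ≠ b)
    (ha : π a ≠ a) (hb : π b = b) :
    gZ (Equiv.swap a b * π) ≤ gZ π + 1 := by
  set c := π.cycleOf a with hcdef
  have hamem : a ∈ π.support := mem_support.mpr ha
  have hcmem : c ∈ π.cycleFactorsFinset := cycleOf_mem_cycleFactorsFinset_iff.mpr hamem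
  have hccycle : c.IsCycle := (mem_cycleFactorsFinset_iff.mp hcmem).1
  have hdisj : Perm.Disjoint (π * c⁻¹) c := disjoint_mul_inv_of_mem_cycleFactorsFinset hcmem
  set ρ := π * c⁻¹ with hρ
  have hπ : π = c * ρ :=
    calc π = ρ * c := by rw [hρ, inv_mul_cancel_right]
    _ = c * ρ := hdisj.commute.eq
  have hac : a ∈ c.support := mem_support_cycleOf_iff.mpr ⟨Perm.SameCycle.refl _ _, hamem⟩
  have hbc : b ∉ c.support := fun hbc => (notMem_support.mpr hb) (support_cycleOf_le π a hbc)
  have hsuppρ : ρ.support ⊆ π.support := by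
    intro x hx
    rw [hπ, (hdisj.symm).support_mul]
    exact Finset.mem_union_right _ hx
  have hdisj2 : Perm.Disjoint (Equiv.swap a b * c) ρ := by
    intro x
    by_cases hx : ρ x = x
    · exact Or.inr hx
    · left
      have hxρ : x ∈ ρ.support := mem_support.mpr hx
      have hxc : c x = x := (hdisj x).resolve_left hx
      have hxa : x ≠ a := fun h => (Finset.disjoint_left.mp hdisj.disjoint_support hxρ) (h ▸ hac)
      have hxb : x ≠ b := fun h => (notMem_support.mpr hb) (hsuppρ (h ▸ hxρ))
      rw [mul_apply, hxc, Equiv.swap_apply_of_ne_of_ne hxa hxb]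
  have hne : Equiv.swap a b * c ≠ 1 := by
    intro h
    have h2 : (Equiv.swap a b * c) b = b := by rw [h]; rfl
    rw [mul_apply, notMem_support.mp hbc, Equiv.swap_apply_right] at h2
    exact hab h2
  have hsub : (Equiv.swap a b * c).support ⊆ insert b c.support := by
    intro x hx
    have hx2 := support_mul_le (Equiv.swap a b) c hx
    rw [Equiv.Perm.support_swap hab] at hx2
    rcases Finset.mem_union.mp hx2 with h | h
    · rcases Finset.mem_insert.mp h with rfl | h
      · exact Finset.mem_insert_of_mem hac
      · rw [Finset.mem_singleton.mp h]; exact Finset.mem_insert_self _ _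
    · exact Finset.mem_insert_of_mem h
  have hcard : (Equiv.swap a b * c).support.card ≤ c.support.card + 1 :=
    le_trans (Finset.card_le_card hsub) (Finset.card_insert_le _ _)
  have hcard' : (((Equiv.swap a b * c).support.card : ℕ) : ℤ) ≤ (c.support.card : ℤ) + 1 := by
    exact_mod_cast hcard
  have key : gZ (Equiv.swap a b * c) ≤ (c.support.card : ℤ) := by
    linarith [gZ_le hne]
  have e1 : gZ (Equiv.swap a b * π) = gZ (Equiv.swap a b * c) + gZ ρ := by
    rw [hπ, ← mul_assoc]; exact gZ_mul_disjoint hdisj2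
  have e2 : gZ π = gZ c + gZ ρ := by
    have h3 := gZ_mul_disjoint hdisj.symm
    rw [← hπ] at h3; exact h3
  rw [e1, e2, gZ_cycle hccycle]
  linarith

/-- Multiplying by a transposition increases `gZ` by at most 1. -/
private lemma gZ_swap_mul {a b : α} (π : Perm α) (hab : a ≠ b) :
    gZ (Equiv.swap a b * π) ≤ gZ π + 1 := by
  by_cases ha : π a = a
  · by_cases hb : π b = b
    · -- both fixed: disjoint
      have hdisj : Perm.Disjoint (Equiv.swap a b) π := by
        intro x
        by_cases hxa : x = a
        · exact Or.inr (hxa ▸ ha)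
        by_cases hxb : x = b
        · exact Or.inr (hxb ▸ hb)
        · exact Or.inl (Equiv.swap_apply_of_ne_of_ne hxa hxb)
      rw [gZ_mul_disjoint hdisj, gZ_cycle (isCycle_swap hab), card_support_swap hab]
      push_cast
      linarith
    · rw [Equiv.swap_comm]
      exact gZ_swap_mul_aux π (Ne.symm hab) hb ha
  · by_cases hb : π b = b
    · exact gZ_swap_mul_aux π hab ha hb
    · -- both moved
      set c := π.cycleOf a with hcdef
      have hamem : a ∈ π.support := mem_support.mpr ha
      have hbmem : b ∈ π.support := mem_support.mpr hb
      have hcmem : c ∈ π.cycleFactorsFinset := cycleOf_mem_cycleFactorsFinset_iff.mpr hamem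
      have hccycle : c.IsCycle := (mem_cycleFactorsFinset_iff.mp hcmem).1
      have hdisj : Perm.Disjoint (π * c⁻¹) c := disjoint_mul_inv_of_mem_cycleFactorsFinset hcmem
      set ρ := π * c⁻¹ with hρ
      have hπ : π = c * ρ :=
        calc π = ρ * c := by rw [hρ, inv_mul_cancel_right]
        _ = c * ρ := hdisj.commute.eq
      have hac : a ∈ c.support := mem_support_cycleOf_iff.mpr ⟨Perm.SameCycle.refl _ _, hamem⟩
      have hsuppρ : ρ.support ⊆ π.support := by
        intro x hx
        rw [hπ, (hdisj.symm).support_mul]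
        exact Finset.mem_union_right _ hx
      by_cases hsc : b ∈ c.support
      · -- C1: same cycle
        have hdisj2 : Perm.Disjoint (Equiv.swap a b * c) ρ := by
          intro x
          by_cases hx : ρ x = x
          · exact Or.inr hx
          · left
            have hxρ : x ∈ ρ.support := mem_support.mpr hx
            have hxc : c x = x := (hdisj x).resolve_left hx
            have hxa : x ≠ a := fun h =>
              (Finset.disjoint_left.mp hdisj.disjoint_support hxρ) (h ▸ hac)
            have hxb : x ≠ b := fun h =>
              (Finset.disjoint_left.mp hdisj.disjoint_support hxρ) (h ▸ hsc)
            rw [mul_apply, hxc, Equiv.swap_apply_of_ne_of_ne hxa hxb]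
        have hsub : (Equiv.swap a b * c).support ⊆ c.support := by
          intro x hx
          have hx2 := support_mul_le (Equiv.swap a b) c hx
          rw [Equiv.Perm.support_swap hab] at hx2
          rcases Finset.mem_union.mp hx2 with h | h
          · rcases Finset.mem_insert.mp h with rfl | h
            · exact hac
            · rw [Finset.mem_singleton.mp h]; exact hsc
          · exact h
        have key : gZ (Equiv.swap a b * c) ≤ (c.support.card : ℤ) := by
          by_cases hne : Equiv.swap a b * c = 1
          · rw [hne, gZ_one]; exact Int.natCast_nonneg _
          · have hcard : (((Equiv.swap a b * c).support.card : ℕ) : ℤ)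
                ≤ (c.support.card : ℤ) := by
              exact_mod_cast Finset.card_le_card hsub
            linarith [gZ_le hne]
        have e1 : gZ (Equiv.swap a b * π) = gZ (Equiv.swap a b * c) + gZ ρ := by
          rw [hπ, ← mul_assoc]; exact gZ_mul_disjoint hdisj2
        have e2 : gZ π = gZ c + gZ ρ := by
          have h3 := gZ_mul_disjoint hdisj.symm
          rw [← hπ] at h3; exact h3
        rw [e1, e2, gZ_cycle hccycle]
        have h2le : (2 : ℤ) ≤ (c.support.card : ℤ) := by
          exact_mod_cast hccycle.two_le_card_support
        linarith
      · -- C2: different cycles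
        have hbρ : b ∈ ρ.support := by
          rw [mem_support, hρ, mul_apply]
          rw [notMem_support] at hsc
          rw [show c⁻¹ b = b from by rw [← hsc, Perm.inv_def, Equiv.symm_apply_apply, hsc]]
          exact hb
        set c' := ρ.cycleOf b with hc'def
        have hc'mem : c' ∈ ρ.cycleFactorsFinset := cycleOf_mem_cycleFactorsFinset_iff.mpr hbρ
        have hc'cycle : c'.IsCycle := (mem_cycleFactorsFinset_iff.mp hc'mem).1
        have hdisj' : Perm.Disjoint (ρ * c'⁻¹) c' :=
          disjoint_mul_inv_of_mem_cycleFactorsFinset hc'mem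
        set ρ' := ρ * c'⁻¹ with hρ'
        have hρeq : ρ = c' * ρ' :=
          calc ρ = ρ' * c' := by rw [hρ', inv_mul_cancel_right]
          _ = c' * ρ' := hdisj'.commute.eq
        have hbc' : b ∈ c'.support := mem_support_cycleOf_iff.mpr ⟨Perm.SameCycle.refl _ _, hbρ⟩
        have hsuppc' : c'.support ⊆ ρ.support := support_cycleOf_le ρ b
        have hsuppρ' : ρ'.support ⊆ ρ.support := by
          intro x hx
          rw [hρeq, (hdisj'.symm).support_mul]
          exact Finset.mem_union_right _ hx
        have hdisjcc' : _root_.Disjoint c.support c'.support :=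
          Finset.disjoint_of_subset_right hsuppc'
            (Finset.disjoint_of_subset_left (le_refl _) hdisj.symm.disjoint_support)
        have hac' : a ∉ c'.support := Finset.disjoint_left.mp hdisjcc' hac
        have hdisj2 : Perm.Disjoint (Equiv.swap a b * (c * c')) ρ' := by
          intro x
          by_cases hx : ρ' x = x
          · exact Or.inr hx
          · left
            have hxρ' : x ∈ ρ'.support := mem_support.mpr hx
            have hxρ : x ∈ ρ.support := hsuppρ' hxρ'
            have hxc : c x = x := (hdisj x).resolve_left (mem_support.mp hxρ)
            have hxc' : c' x = x := (hdisj' x).resolve_left hx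
            have hxa : x ≠ a := fun h =>
              (Finset.disjoint_left.mp hdisj.disjoint_support hxρ) (h ▸ hac)
            have hxb : x ≠ b := fun h =>
              (Finset.disjoint_left.mp hdisj'.disjoint_support hxρ') (h ▸ hbc')
            rw [mul_apply, mul_apply, hxc', hxc, Equiv.swap_apply_of_ne_of_ne hxa hxb]
        have hdisjcc'p : Perm.Disjoint c c' := by
          rw [disjoint_iff_disjoint_support]; exact hdisjcc'
        have hsub : (Equiv.swap a b * (c * c')).support ⊆ c.support ∪ c'.support := by
          intro x hx
          have hx2 := support_mul_le (Equiv.swap a b) (c * c') hx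
          rw [Equiv.Perm.support_swap hab] at hx2
          rcases Finset.mem_union.mp hx2 with h | h
          · rcases Finset.mem_insert.mp h with rfl | h
            · exact Finset.mem_union_left _ hac
            · rw [Finset.mem_singleton.mp h]; exact Finset.mem_union_right _ hbc'
          · exact (support_mul_le c c') h
        have hne : Equiv.swap a b * (c * c') ≠ 1 := by
          intro h
          have hcc' : c * c' = Equiv.swap a b := by
            have := congrArg (fun z => Equiv.swap a b * z) h
            simpa [← mul_assoc, Equiv.swap_mul_self] using this
          have hcard : (c * c').support.card = 2 := by
            rw [hcc', card_support_swap hab]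
          rw [hdisjcc'p.support_mul, Finset.card_union_of_disjoint hdisjcc'] at hcard
          have h1 := hccycle.two_le_card_support
          have h2 := hc'cycle.two_le_card_support
          omega
        have hcard : (((Equiv.swap a b * (c * c')).support.card : ℕ) : ℤ)
            ≤ (c.support.card : ℤ) + (c'.support.card : ℤ) := by
          have := le_trans (Finset.card_le_card hsub) (Finset.card_union_le _ _)
          exact_mod_cast this
        have key : gZ (Equiv.swap a b * (c * c'))
            ≤ (c.support.card : ℤ) + (c'.support.card : ℤ) - 1 := by
          linarith [gZ_le hne]
        have hπ2 : π = c * c' * ρ' := by rw [hπ, hρeq, mul_assoc]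
        have e1 : gZ (Equiv.swap a b * π) = gZ (Equiv.swap a b * (c * c')) + gZ ρ' := by
          rw [hπ2, ← mul_assoc]
          exact gZ_mul_disjoint hdisj2
        have e2 : gZ π = gZ c + gZ c' + gZ ρ' := by
          have h3 := gZ_mul_disjoint hdisj.symm
          rw [← hπ] at h3
          have h4 := gZ_mul_disjoint hdisj'.symm
          rw [← hρeq] at h4
          rw [h3, h4]; ring
        rw [e1, e2, gZ_cycle hccycle, gZ_cycle hc'cycle]
        linarith

private lemma gZ_prod_le : ∀ (l : List (Perm α)), (∀ g ∈ l, g.IsSwap) → gZ l.prod ≤ l.length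
  | [], _ => by simp [gZ_one]
  | (s :: t), h => by
    obtain ⟨a, b, hab, rfl⟩ := h s List.mem_cons_self
    rw [List.prod_cons]
    have h1 := gZ_swap_mul t.prod hab
    have ih := gZ_prod_le t (fun g hg => h g (List.mem_cons_of_mem _ hg))
    simp only [List.length_cons]
    push_cast
    linarith

private lemma isSwap_zipWith : ∀ (l : List α), l.Nodup →
    ∀ g ∈ List.zipWith Equiv.swap l l.tail, g.IsSwap
  | [], _, g, hg => by simp at hg
  | [a], _, g, hg => by simp at hg
  | a :: b :: t, h, g, hg => by
    rw [List.tail_cons, List.zipWith_cons_cons, List.mem_cons] at hg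
    rcases hg with rfl | hg
    · refine ⟨a, b, ?_, rfl⟩
      intro hab
      subst hab
      simp at h
    · exact isSwap_zipWith (b :: t) h.of_cons g (by rwa [List.tail_cons])

private lemma cycle_eq_prod_swaps {c : Perm α} (hc : c.IsCycle) :
    ∃ l : List (Perm α), (∀ g ∈ l, g.IsSwap) ∧ l.prod = c ∧ l.length + 1 = c.support.card := by
  obtain ⟨x, hx, -⟩ := id hc
  have hlen : (c.toList x).length = c.support.card := by
    rw [length_toList, hc.cycleOf_eq hx]
  have h2 : 2 ≤ (c.toList x).length := by
    rw [hlen]; exact hc.two_le_card_support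
  refine ⟨List.zipWith Equiv.swap (c.toList x) (c.toList x).tail,
    isSwap_zipWith _ (nodup_toList c x), ?_, ?_⟩
  · show (List.formPerm (c.toList x)) = c
    rw [formPerm_toList, hc.cycleOf_eq hx]
  · rw [List.length_zipWith, List.length_tail, hlen]
    omega

/-- If `(σ₁, …, σ_{r-1})` is a factorization of a `d`-cycle `τ` of type `(e₁, …, e_{r-1})`,
then `∑ (eᵢ - 1) = d - 1 + 2g` for some integer `g ≥ 0`. -/
theorem fac_riemann_hurwitz (d r : ℕ)
    (τ : Perm (Fin d)) (hτ : τ.IsCycle) (hτd : τ.support.card = d)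
    (e : Fin (r - 1) → ℕ) (he : ∀ i, 2 ≤ e i)
    (σ : Fin (r - 1) → Perm (Fin d))
    (hσ : (∀ i, (σ i).IsCycle ∧ (σ i).support.card = e i) ∧ (List.ofFn σ).prod = τ) :
    ∃ g : ℕ, ∑ i, (e i - 1) = d - 1 + 2 * g := by
  obtain ⟨h1, h2⟩ := hσ
  have hd2 : 2 ≤ d := hτd ▸ hτ.two_le_card_support
  -- choose swap decompositions of each σ i
  have hex : ∀ i, ∃ l : List (Perm (Fin d)),
      (∀ g ∈ l, g.IsSwap) ∧ l.prod = σ i ∧ l.length = e i - 1 := by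
    intro i
    obtain ⟨l, hl1, hl2, hl3⟩ := cycle_eq_prod_swaps (h1 i).1
    rw [(h1 i).2] at hl3
    exact ⟨l, hl1, hl2, by omega⟩
  choose L hL1 hL2 hL3 using hex
  set big := (List.ofFn L).flatten with hbigdef
  have hbig_swap : ∀ g ∈ big, g.IsSwap := by
    intro g hg
    rw [hbigdef, List.mem_flatten] at hg
    obtain ⟨l, hl, hgl⟩ := hg
    rw [List.mem_ofFn] at hl
    obtain ⟨i, rfl⟩ := hl
    exact hL1 i g hgl
  have hbig_prod : big.prod = τ := by
    rw [hbigdef, List.prod_flatten, List.map_ofFn, ← h2]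
    congr 1
    exact congrArg List.ofFn (funext fun i => hL2 i)
  have hbig_len : big.length = ∑ i, (e i - 1) := by
    rw [hbigdef, List.length_flatten, List.map_ofFn, List.sum_ofFn]
    exact Finset.sum_congr rfl fun i _ => hL3 i
  -- inequality
  have hineq : gZ τ ≤ (big.length : ℤ) := hbig_prod ▸ gZ_prod_le big hbig_swap
  have hgτ : gZ τ = (d : ℤ) - 1 := by rw [gZ_cycle hτ, hτd]
  have hN : (d : ℤ) - 1 ≤ ((∑ i, (e i - 1) : ℕ) : ℤ) := by
    rw [← hbig_len]
    rw [hgτ] at hineq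
    exact_mod_cast hineq
  -- parity via sign
  have hsign : Perm.sign τ = ∏ i, Perm.sign (σ i) := by
    rw [← h2, map_list_prod, List.map_ofFn, List.prod_ofFn]
    rfl
  have hsignτ : Perm.sign τ = -(-1 : ℤˣ) ^ d := by rw [hτ.sign, hτd]
  have hsignσ : ∀ i, Perm.sign (σ i) = -(-1 : ℤˣ) ^ (e i) := fun i => by
    rw [(h1 i).1.sign, (h1 i).2]
  have hprod : (∏ i, Perm.sign (σ i))
      = (-1 : ℤˣ) ^ (Fintype.card (Fin (r - 1)) + ∑ i, e i) := by
    simp_rw [hsignσ]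
    have : ∀ i : Fin (r - 1), -(-1 : ℤˣ) ^ (e i) = (-1) * (-1 : ℤˣ) ^ (e i) := fun i =>
      neg_eq_neg_one_mul _
    simp_rw [this]
    rw [Finset.prod_mul_distrib, Finset.prod_const, Finset.prod_pow_eq_pow_sum, ← pow_add,
      Finset.card_univ]
  have heven : Even (d + 1 + (Fintype.card (Fin (r - 1)) + ∑ i, e i)) := by
    have h3 : (-1 : ℤˣ) ^ (d + 1) = (-1 : ℤˣ) ^ (Fintype.card (Fin (r - 1)) + ∑ i, e i) := by
      rw [← hprod, ← hsign, hsignτ, pow_succ, mul_neg_one]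
    have h4 : (-1 : ℤˣ) ^ (d + 1 + (Fintype.card (Fin (r - 1)) + ∑ i, e i)) = 1 := by
      rw [pow_add, h3, ← pow_add, ← two_mul, pow_mul]
      norm_num
    have h5 : ((-1 : ℤˣ) ≠ 1) := by decide
    exact (neg_one_pow_eq_one_iff_even h5).mp h4
  have hsum : ∑ i, e i = (∑ i, (e i - 1)) + Fintype.card (Fin (r - 1)) := by
    have h6 : ∀ i : Fin (r - 1), e i = (e i - 1) + 1 := fun i => by have := he i; omega
    calc ∑ i, e i = ∑ i, ((e i - 1) + 1) := Finset.sum_congr rfl fun i _ => h6 i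
    _ = (∑ i, (e i - 1)) + ∑ _i : Fin (r - 1), 1 := Finset.sum_add_distrib
    _ = _ := by rw [Finset.sum_const, smul_eq_mul, mul_one, Finset.card_univ]
  rw [hsum] at heven
  obtain ⟨k, hk⟩ := heven
  exact ⟨k - d - Fintype.card (Fin (r - 1)), by omega⟩
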